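/- arXiv:1806.04739 — 3 statements merged into one kernel-verified Lean document; each statement's English description precedes it below -/
import Mathlib

section
/- A continuous function f on [0,1] belongs to ℋ if and only if there exists a continuous function g on [0,1] with g(1)=0 such that f(x) = x·g(x) for all x ∈ [0,1]; moreover in that case g is unique and ‖f‖_ℋ = sup_{x∈[0,1]} |g(x)|. -/
open Set

def InH (f : ℝ → ℝ) : Prop :=
  ContinuousOn f (Icc 0 1) ∧ f 0 = 0 ∧ f 1 = 0 ∧
    ∃ L : ℝ, HasDerivWithinAt f L (Icc 0 1) 0

noncomputable def Hnorm (f : ℝ → ℝ) : ℝ :=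
  sSup ((fun x => |f x / x|) '' Ioc (0:ℝ) 1)

open Filter Topology


lemma icc_diff : (Icc (0:ℝ) 1) \ {0} = Ioc 0 1 := by
  ext x
  simp only [mem_diff, mem_Icc, mem_singleton_iff, mem_Ioc]
  constructor
  · rintro ⟨⟨h0, h1⟩, hne⟩; exact ⟨lt_of_le_of_ne h0 (Ne.symm hne), h1⟩
  · rintro ⟨h0, h1⟩; exact ⟨⟨le_of_lt h0, h1⟩, ne_of_gt h0⟩

lemma nebot_Ioc : (𝓝[Ioc (0:ℝ) 1] 0).NeBot := by
  apply mem_closure_iff_nhdsWithin_neBot.mp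
  rw [closure_Ioc one_ne_zero.symm]
  exact ⟨le_refl 0, zero_le_one⟩

-- uniqueness
lemma uniq (g₁ g₂ : ℝ → ℝ) (h₁ : ContinuousOn g₁ (Icc 0 1)) (h₂ : ContinuousOn g₂ (Icc 0 1))
    (heq : ∀ x ∈ Icc (0:ℝ) 1, x * g₁ x = x * g₂ x) :
    ∀ x ∈ Icc (0:ℝ) 1, g₁ x = g₂ x := by
  have hIoc : EqOn g₁ g₂ (Ioc 0 1) := by
    intro x hx
    have := heq x ⟨le_of_lt hx.1, hx.2⟩
    exact mul_left_cancel₀ (ne_of_gt hx.1) this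
  intro x hx
  rcases eq_or_ne x 0 with rfl | hne
  · have c₁ : Filter.Tendsto g₁ (𝓝[Ioc (0:ℝ) 1] 0) (𝓝 (g₁ 0)) :=
      (h₁ 0 ⟨le_refl 0, zero_le_one⟩).mono_left
        (nhdsWithin_mono _ (by rw [← icc_diff]; exact diff_subset))
    have c₂ : Filter.Tendsto g₁ (𝓝[Ioc (0:ℝ) 1] 0) (𝓝 (g₂ 0)) := by
      have h := (h₂ 0 ⟨le_refl 0, zero_le_one⟩)
      have : Filter.Tendsto g₂ (𝓝[Ioc (0:ℝ) 1] 0) (𝓝 (g₂ 0)) :=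
        h.mono_left (nhdsWithin_mono _ (by rw [← icc_diff]; exact diff_subset))
      exact this.congr' (eventually_nhdsWithin_of_forall (fun y hy => (hIoc hy).symm))
    have := nebot_Ioc
    exact tendsto_nhds_unique c₁ c₂
  · have h0 : 0 < x := lt_of_le_of_ne hx.1 (Ne.symm hne)
    exact hIoc ⟨h0, hx.2⟩

lemma mk_g (f : ℝ → ℝ) (hf : ContinuousOn f (Icc 0 1)) (h0 : f 0 = 0) (h1 : f 1 = 0)
    (L : ℝ) (hD : HasDerivWithinAt f L (Icc 0 1) 0) :
    ∃ g : ℝ → ℝ, ContinuousOn g (Icc 0 1) ∧ g 1 = 0 ∧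
      ∀ x ∈ Icc (0:ℝ) 1, f x = x * g x := by
  set g : ℝ → ℝ := fun x => if x = 0 then L else f x / x with hg
  have hslope : Tendsto (slope f 0) (𝓝[Icc (0:ℝ) 1 \ {0}] 0) (𝓝 L) :=
    hasDerivWithinAt_iff_tendsto_slope.mp hD
  have hgIoc : ∀ y ∈ Ioc (0:ℝ) 1, g y = f y / y := by
    intro y hy; simp [hg, ne_of_gt hy.1]
  refine ⟨g, ?_, ?_, ?_⟩
  · intro x hx
    rcases eq_or_ne x 0 with rfl | hne
    · rw [← continuousWithinAt_diff_self, icc_diff]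
      have : Tendsto g (𝓝[Ioc (0:ℝ) 1] 0) (𝓝 L) := by
        refine (hslope.mono_left (by rw [icc_diff])).congr' ?_
        refine eventually_nhdsWithin_of_forall (fun y hy => ?_)
        rw [hgIoc y hy, slope_def_field, h0, sub_zero, sub_zero]
      have hL : g 0 = L := by simp [hg]
      rw [ContinuousWithinAt, hL]
      exact this
    · have hmem : {y : ℝ | y ≠ 0} ∈ 𝓝[Icc (0:ℝ) 1] x :=
        mem_nhdsWithin_of_mem_nhds (isOpen_ne.mem_nhds hne)
    
      have : ContinuousWithinAt (fun y => f y / y) (Icc 0 1) x :=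
        (hf x hx).div continuousWithinAt_id hne
      refine this.congr_of_eventuallyEq ?_ (by simp [hg, hne])
      filter_upwards [hmem] with y hy
      simp [hg, hy]
  · simp [hg, h1]
  · intro x hx
    rcases eq_or_ne x 0 with rfl | hne
    · simp [h0]
    · have hxpos : (0:ℝ) < x := lt_of_le_of_ne hx.1 (Ne.symm hne)
      rw [hgIoc x ⟨hxpos, hx.2⟩, mul_div_cancel₀ _ hne]

lemma mk_deriv (f g : ℝ → ℝ) (hg : ContinuousOn g (Icc 0 1))
    (heq : ∀ x ∈ Icc (0:ℝ) 1, f x = x * g x) :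
    HasDerivWithinAt f (g 0) (Icc 0 1) 0 := by
  rw [hasDerivWithinAt_iff_tendsto_slope, icc_diff]
  have hc : Tendsto g (𝓝[Ioc (0:ℝ) 1] 0) (𝓝 (g 0)) :=
    (hg 0 ⟨le_refl 0, zero_le_one⟩).mono_left
      (nhdsWithin_mono _ (by rw [← icc_diff]; exact diff_subset))
  refine hc.congr' (eventually_nhdsWithin_of_forall (fun y hy => ?_))
  have hy0 : f 0 = 0 := by simpa using heq 0 ⟨le_refl 0, zero_le_one⟩
  rw [slope_def_field, heq y ⟨le_of_lt hy.1, hy.2⟩, hy0, sub_zero, sub_zero,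
    mul_comm, mul_div_assoc, div_self (ne_of_gt hy.1), mul_one]

lemma norm_eq (f g : ℝ → ℝ) (hg : ContinuousOn g (Icc 0 1))
    (heq : ∀ x ∈ Icc (0:ℝ) 1, f x = x * g x) :
    sSup ((fun x => |f x / x|) '' Ioc (0:ℝ) 1) = sSup ((fun x => |g x|) '' Icc (0:ℝ) 1) := by
  have himg : (fun x => |f x / x|) '' Ioc (0:ℝ) 1 = (fun x => |g x|) '' Ioc (0:ℝ) 1 := by
    apply image_congr
    intro x hx
    rw [heq x ⟨le_of_lt hx.1, hx.2⟩, mul_comm, mul_div_assoc, div_self (ne_of_gt hx.1), mul_one]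
  rw [himg]
  have habs : ContinuousOn (fun x => |g x|) (Icc (0:ℝ) 1) := hg.abs
  have hbdd2 : BddAbove ((fun x => |g x|) '' Icc (0:ℝ) 1) :=
    (isCompact_Icc.image_of_continuousOn habs).bddAbove
  have hsub : (fun x => |g x|) '' Ioc (0:ℝ) 1 ⊆ (fun x => |g x|) '' Icc (0:ℝ) 1 :=
    image_mono Ioc_subset_Icc_self
  have hbdd1 : BddAbove ((fun x => |g x|) '' Ioc (0:ℝ) 1) := hbdd2.mono hsub
  have hne1 : ((fun x => |g x|) '' Ioc (0:ℝ) 1).Nonempty :=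
    (nonempty_Ioc.mpr zero_lt_one).image _
  apply le_antisymm
  · exact csSup_le_csSup hbdd2 hne1 hsub
  · apply csSup_le ((nonempty_Icc.mpr zero_le_one).image _)
    rintro y ⟨x, hx, rfl⟩
    rcases eq_or_ne x 0 with rfl | hne
    · -- |g 0| is a limit of values in the image over Ioc
      have hc : Tendsto (fun x => |g x|) (𝓝[Ioc (0:ℝ) 1] 0) (𝓝 |g 0|) :=
        (habs 0 ⟨le_refl 0, zero_le_one⟩).mono_left
          (nhdsWithin_mono _ (by rw [← icc_diff]; exact diff_subset))
      have := nebot_Ioc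
      refine le_of_tendsto hc (eventually_nhdsWithin_of_forall (fun y hy => ?_))
      exact le_csSup hbdd1 (mem_image_of_mem _ hy)
    · exact le_csSup hbdd1 (mem_image_of_mem _
        ⟨lt_of_le_of_ne hx.1 (Ne.symm hne), hx.2⟩)

theorem stmt1 (f : ℝ → ℝ) (hf : ContinuousOn f (Icc 0 1)) :
    (InH f ↔ ∃ g : ℝ → ℝ, ContinuousOn g (Icc 0 1) ∧ g 1 = 0 ∧
      ∀ x ∈ Icc (0:ℝ) 1, f x = x * g x) ∧
    (∀ g₁ g₂ : ℝ → ℝ, ContinuousOn g₁ (Icc 0 1) → ContinuousOn g₂ (Icc 0 1) →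
      (∀ x ∈ Icc (0:ℝ) 1, f x = x * g₁ x) →
      (∀ x ∈ Icc (0:ℝ) 1, f x = x * g₂ x) →
      ∀ x ∈ Icc (0:ℝ) 1, g₁ x = g₂ x) ∧
    (∀ g : ℝ → ℝ, ContinuousOn g (Icc 0 1) → g 1 = 0 →
      (∀ x ∈ Icc (0:ℝ) 1, f x = x * g x) →
      Hnorm f = sSup ((fun x => |g x|) '' Icc (0:ℝ) 1)) := by
  refine ⟨⟨?_, ?_⟩, ?_, ?_⟩
  · rintro ⟨hc, h0, h1, L, hD⟩
    exact mk_g f hc h0 h1 L hD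
  · rintro ⟨g, hgc, hg1, heq⟩
    refine ⟨hf, by simpa using heq 0 ⟨le_refl 0, zero_le_one⟩,
      by simpa [hg1] using heq 1 ⟨zero_le_one, le_refl 1⟩, g 0, mk_deriv f g hgc heq⟩
  · intro g₁ g₂ h₁ h₂ he₁ he₂
    exact uniq g₁ g₂ h₁ h₂ (fun x hx => by rw [← he₁ x hx, ← he₂ x hx])
  · intro g hgc hg1 heq
    exact norm_eq f g hgc heq
end

section
/- The normed space (ℋ, ‖·‖_ℋ) is a Banach space, i.e. it is complete. -/
open Set Filter Topology

/-- The continuous extension of `x ↦ h x / x` to `[0,1]`. -/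
noncomputable def Hext (h : ℝ → ℝ) (L : ℝ) : ℝ → ℝ :=
  fun x => if x = 0 then L else h x / x

lemma ext_contOn {h : ℝ → ℝ} {L : ℝ} (hc : ContinuousOn h (Icc 0 1))
    (h0 : h 0 = 0) (hd : HasDerivWithinAt h L (Icc 0 1) 0) :
    ContinuousOn (Hext h L) (Icc 0 1) := by
  intro x hx
  rcases eq_or_ne x 0 with rfl | hx0
  · rw [← continuousWithinAt_diff_self]
    have hs : Tendsto (slope h 0) (𝓝[Icc 0 1 \ {0}] 0) (𝓝 L) :=
      hasDerivWithinAt_iff_tendsto_slope.mp hd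
    have : Tendsto (Hext h L) (𝓝[Icc 0 1 \ {0}] 0) (𝓝 L) := by
      refine hs.congr' ?_
      filter_upwards [self_mem_nhdsWithin] with y hy
      have hy0 : y ≠ 0 := hy.2
      simp [Hext, slope, hy0, h0, div_eq_inv_mul]
    have h00 : Hext h L 0 = L := if_pos rfl
    rw [ContinuousWithinAt, h00]
    exact this
  · have hcw : ContinuousWithinAt (fun y => h y / y) (Icc 0 1) x :=
      (hc x hx).div continuousWithinAt_id hx0
    have heq : (fun y => h y / y) =ᶠ[𝓝 x] Hext h L := by
      filter_upwards [isOpen_ne.mem_nhds hx0] with y hy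
      simp [Hext, hy]
    exact (hcw.congr_of_eventuallyEq (heq.symm.filter_mono nhdsWithin_le_nhds)
      (by simp [Hext, hx0]))

lemma ext_bdd {h : ℝ → ℝ} (hH : InH h) :
    BddAbove ((fun x => |h x / x|) '' Ioc (0:ℝ) 1) := by
  obtain ⟨hc, h0, -, L, hd⟩ := hH
  obtain ⟨C, hC⟩ := isCompact_Icc.exists_bound_of_continuousOn (ext_contOn hc h0 hd)
  refine ⟨C, ?_⟩
  rintro - ⟨x, hx, rfl⟩
  have hx0 : x ≠ 0 := ne_of_gt hx.1
  have := hC x (Ioc_subset_Icc_self hx)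
  simpa only [Hext, if_neg hx0, Real.norm_eq_abs] using this

lemma Hnorm_le {h : ℝ → ℝ} {C : ℝ} (hC : 0 ≤ C)
    (hb : ∀ x ∈ Ioc (0:ℝ) 1, |h x / x| ≤ C) : Hnorm h ≤ C := by
  refine Real.sSup_le ?_ hC
  rintro - ⟨x, hx, rfl⟩
  exact hb x hx

theorem stmt2 (f : ℕ → ℝ → ℝ) (hf : ∀ n, InH (f n))
    (hcauchy : ∀ ε > 0, ∃ N : ℕ, ∀ m ≥ N, ∀ n ≥ N,
      Hnorm (fun x => f m x - f n x) < ε) :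
    ∃ g : ℝ → ℝ, InH g ∧ ∀ ε > 0, ∃ N : ℕ, ∀ n ≥ N,
      Hnorm (fun x => f n x - g x) < ε := by
  classical
  -- derivatives at 0
  choose hc h0 h1 hL using hf
  set L : ℕ → ℝ := fun n => (hL n).choose with hLdef
  have hd : ∀ n, HasDerivWithinAt (f n) (L n) (Icc 0 1) 0 := fun n => (hL n).choose_spec
  -- the extensions as continuous maps on [0,1]
  have hextc : ∀ n, ContinuousOn (Hext (f n) (L n)) (Icc 0 1) :=
    fun n => ext_contOn (hc n) (h0 n) (hd n)
  set ψ : ℕ → C(Icc (0:ℝ) 1, ℝ) := fun n =>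
    ⟨fun x => Hext (f n) (L n) x, continuousOn_iff_continuous_restrict.mp (hextc n)⟩ with hψ
  -- differences are in H
  have hdiffH : ∀ m n, InH (fun x => f m x - f n x) := by
    intro m n
    exact ⟨(hc m).sub (hc n), by simp [h0], by simp [h1], L m - L n, (hd m).sub (hd n)⟩
  -- pointwise bound by Hnorm
  have hptle : ∀ m n, ∀ x : Icc (0:ℝ) 1,
      dist (ψ m x) (ψ n x) ≤ Hnorm (fun x => f m x - f n x) := by
    intro m n x
    rcases eq_or_ne (x : ℝ) 0 with hx0 | hx0
    · -- at 0, use continuity: limit of values on (0,1]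
      have hmem : (0:ℝ) ∈ Icc (0:ℝ) 1 := ⟨le_refl 0, zero_le_one⟩
      have hcw : ContinuousWithinAt (fun y => dist (Hext (f m) (L m) y) (Hext (f n) (L n) y))
          (Icc 0 1) 0 := ((hextc m 0 hmem).dist (hextc n 0 hmem))
      have hne : (𝓝[Ioc (0:ℝ) 1] (0:ℝ)).NeBot := by
        refine mem_closure_iff_nhdsWithin_neBot.mp ?_
        rw [closure_Ioc one_ne_zero.symm]
        exact hmem
      have htt : Tendsto (fun y => dist (Hext (f m) (L m) y) (Hext (f n) (L n) y))
          (𝓝[Ioc (0:ℝ) 1] (0:ℝ)) (𝓝 (dist (Hext (f m) (L m) 0) (Hext (f n) (L n) 0))) :=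
        hcw.mono_left (nhdsWithin_mono _ Ioc_subset_Icc_self)
      have hbd : ∀ᶠ y in 𝓝[Ioc (0:ℝ) 1] (0:ℝ),
          dist (Hext (f m) (L m) y) (Hext (f n) (L n) y) ≤ Hnorm (fun x => f m x - f n x) := by
        filter_upwards [self_mem_nhdsWithin] with y hy
        have hy0 : y ≠ 0 := ne_of_gt hy.1
        have hmem2 : |f m y / y - f n y / y| ∈ (fun x => |(f m x - f n x) / x|) '' Ioc (0:ℝ) 1 := by
          refine ⟨y, hy, ?_⟩
          simp [sub_div]
        have := le_csSup (ext_bdd (hdiffH m n)) hmem2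
        simpa only [Hext, if_neg hy0, Real.dist_eq, Hnorm] using this
      have := le_of_tendsto htt hbd
      have hx : (x : ℝ) = 0 := hx0
      simp only [hψ, ContinuousMap.coe_mk]
      show dist (Hext (f m) (L m) (x:ℝ)) (Hext (f n) (L n) (x:ℝ)) ≤ _
      rw [hx]
      exact this
    · have hy : (x : ℝ) ∈ Ioc (0:ℝ) 1 := ⟨lt_of_le_of_ne x.2.1 (Ne.symm hx0), x.2.2⟩
      have hmem2 : |f m x / x - f n x / x| ∈ (fun z => |(f m z - f n z) / z|) '' Ioc (0:ℝ) 1 := by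
        refine ⟨x, hy, ?_⟩
        simp [sub_div]
      have := le_csSup (ext_bdd (hdiffH m n)) hmem2
      simpa only [hψ, ContinuousMap.coe_mk, Hext, if_neg hx0, Real.dist_eq, Hnorm] using this
  -- ψ is Cauchy
  have hψcauchy : CauchySeq ψ := by
    rw [Metric.cauchySeq_iff]
    intro ε hε
    obtain ⟨N, hN⟩ := hcauchy (ε/2) (by positivity)
    refine ⟨N, fun m hm n hn => ?_⟩
    have : dist (ψ m) (ψ n) ≤ ε/2 := by
      rw [ContinuousMap.dist_le (by positivity)]
      intro x
      exact (hptle m n x).trans (hN m hm n hn).le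
    linarith
  obtain ⟨Ψ, hΨ⟩ := cauchySeq_tendsto_of_complete hψcauchy
  -- the limit function
  set g : ℝ → ℝ := fun x => x * Ψ (projIcc 0 1 zero_le_one x) with hg
  have hΨcont : Continuous (fun x : ℝ => Ψ (projIcc 0 1 zero_le_one x)) :=
    Ψ.continuous.comp continuous_projIcc
  have hgcont : Continuous g := continuous_id.mul hΨcont
  -- pointwise convergence of ψ
  have hpt : ∀ x : Icc (0:ℝ) 1, Tendsto (fun n => ψ n x) atTop (𝓝 (Ψ x)) :=
    fun x => ((ContinuousEvalConst.continuous_eval_const x).tendsto Ψ).comp hΨ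
  have hmem0 : (0:ℝ) ∈ Icc (0:ℝ) 1 := ⟨le_refl 0, zero_le_one⟩
  have hmem1 : (1:ℝ) ∈ Icc (0:ℝ) 1 := ⟨zero_le_one, le_refl 1⟩
  have hΨ1 : Ψ ⟨1, hmem1⟩ = 0 := by
    have h1' : Tendsto (fun n => ψ n ⟨1, hmem1⟩) atTop (𝓝 0) := by
      have heq : (fun n => ψ n ⟨1, hmem1⟩) = fun _ => (0:ℝ) := by
        funext n
        simp only [hψ, ContinuousMap.coe_mk, Hext, if_neg (one_ne_zero (α := ℝ)), h1 n,
          zero_div]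
      rw [heq]; exact tendsto_const_nhds
    exact tendsto_nhds_unique (hpt ⟨1, hmem1⟩) h1'
  refine ⟨g, ⟨hgcont.continuousOn, by simp [hg], ?_, Ψ ⟨0, hmem0⟩, ?_⟩, ?_⟩
  · -- g 1 = 0
    have e : g 1 = 1 * Ψ ⟨1, hmem1⟩ := by
      simp only [hg]
      rw [projIcc_of_mem zero_le_one hmem1]
    rw [e, hΨ1, mul_zero]
  · -- derivative at 0
    rw [hasDerivWithinAt_iff_tendsto_slope]
    have htt : Tendsto (fun x : ℝ => Ψ (projIcc 0 1 zero_le_one x)) (𝓝[Icc 0 1 \ {0}] 0)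
        (𝓝 (Ψ ⟨0, hmem0⟩)) := by
      have := hΨcont.tendsto 0
      rw [projIcc_of_mem zero_le_one hmem0] at this
      exact this.mono_left nhdsWithin_le_nhds
    refine htt.congr' ?_
    filter_upwards [self_mem_nhdsWithin] with y hy
    have hy0 : y ≠ 0 := hy.2
    simp [slope, hg, hy0, mul_comm, mul_div_assoc]
  · -- convergence
    intro ε hε
    obtain ⟨N, hN⟩ := Metric.tendsto_atTop.mp hΨ (ε/2) (by positivity)
    refine ⟨N, fun n hn => ?_⟩
    have hle : Hnorm (fun x => f n x - g x) ≤ ε/2 := by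
      refine Hnorm_le (by positivity) ?_
      intro x hx
      have hx0 : x ≠ 0 := ne_of_gt hx.1
      have hxmem : x ∈ Icc (0:ℝ) 1 := Ioc_subset_Icc_self hx
      have e1 : ψ n ⟨x, hxmem⟩ = f n x / x := by
        simp only [hψ, ContinuousMap.coe_mk, Hext, if_neg hx0]
      have e2 : g x = x * Ψ ⟨x, hxmem⟩ := by
        simp only [hg]
        rw [projIcc_of_mem zero_le_one hxmem]
      have : (f n x - g x) / x = ψ n ⟨x, hxmem⟩ - Ψ ⟨x, hxmem⟩ := by
        rw [e1, e2, sub_div, mul_comm, mul_div_assoc, div_self hx0, mul_one]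
      rw [this]
      have h1 : |ψ n ⟨x, hxmem⟩ - Ψ ⟨x, hxmem⟩| = dist (ψ n ⟨x, hxmem⟩) (Ψ ⟨x, hxmem⟩) :=
        (Real.dist_eq _ _).symm
      rw [h1]
      exact (ContinuousMap.dist_apply_le_dist _).trans (hN n hn).le
    linarith
end

section
/- Let J(t,x,y) := (4πt)^{−1/2}[exp(−(x−y)²/(4t)) − exp(−(x+y)²/(4t))] for t > 0. Then there exists a constant C > 0 such that for every t > 0 and every x ∈ (0,1], ∫₀¹ (1/x)·J(t,x,y) dy ≤ C/√t. -/
noncomputable def Jker (t x y : ℝ) : ℝ :=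
  (Real.sqrt (4 * Real.pi * t))⁻¹ *
    (Real.exp (-(x - y) ^ 2 / (4 * t)) - Real.exp (-(x + y) ^ 2 / (4 * t)))

open MeasureTheory Real intervalIntegral

lemma gauss_cont (t x : ℝ) : Continuous (fun y : ℝ => Real.exp (-(x - y) ^ 2 / (4 * t))) := by
  continuity

lemma gauss_int_le (t x : ℝ) (ht : 0 < t) :
    ∫ y in (0:ℝ)..1, Real.exp (-(x - y) ^ 2 / (4 * t)) ≤ Real.sqrt (4 * Real.pi * t) := by
  have hb : 0 < (4 * t)⁻¹ := by positivity
  have hrw : ∀ y : ℝ, Real.exp (-(x - y) ^ 2 / (4 * t))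
      = (fun z : ℝ => Real.exp (-(4 * t)⁻¹ * z ^ 2)) (y - x) := by
    intro y
    simp only
    congr 1
    have : (x - y) ^ 2 = (y - x) ^ 2 := by ring
    rw [this]; field_simp
  have hint : Integrable (fun y : ℝ => Real.exp (-(x - y) ^ 2 / (4 * t))) := by
    simp only [funext hrw]
    exact (integrable_exp_neg_mul_sq hb).comp_sub_right x
  have htot : ∫ y : ℝ, Real.exp (-(x - y) ^ 2 / (4 * t)) = Real.sqrt (4 * Real.pi * t) := by
    simp only [funext hrw]
    rw [integral_sub_right_eq_self (fun z : ℝ => Real.exp (-(4 * t)⁻¹ * z ^ 2)) x,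
      integral_gaussian]
    congr 1
    rw [div_eq_mul_inv, inv_inv]; ring
  rw [intervalIntegral.integral_of_le (by norm_num : (0:ℝ) ≤ 1)]
  calc ∫ y in Set.Ioc (0:ℝ) 1, Real.exp (-(x - y) ^ 2 / (4 * t))
      ≤ ∫ y : ℝ, Real.exp (-(x - y) ^ 2 / (4 * t)) :=
        setIntegral_le_integral hint (Filter.Eventually.of_forall fun y => (Real.exp_pos _).le)
    _ = Real.sqrt (4 * Real.pi * t) := htot

lemma ftc_int (t x : ℝ) (ht : 0 < t) :
    ∫ y in (0:ℝ)..1, (y - x) * Real.exp (-(x - y) ^ 2 / (4 * t)) ≤ 2 * t := by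
  have hderiv : ∀ y ∈ Set.uIcc (0:ℝ) 1,
      HasDerivAt (fun y : ℝ => -(2 * t) * Real.exp (-(x - y) ^ 2 / (4 * t)))
        ((y - x) * Real.exp (-(x - y) ^ 2 / (4 * t))) y := by
    intro y _
    have hu : HasDerivAt (fun y : ℝ => -(x - y) ^ 2 / (4 * t)) ((x - y) / (2 * t)) y := by
      have h1 : HasDerivAt (fun y : ℝ => x - y) (-1) y :=
        (hasDerivAt_id y).const_sub x |>.congr_deriv (by ring)
      have h2 : HasDerivAt (fun y : ℝ => (x - y) ^ 2) (2 * (x - y) * (-1)) y := by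
        simpa using h1.fun_pow 2
      have h3 := (h2.fun_neg).div_const (4 * t)
      refine h3.congr_deriv ?_
      rw [div_eq_div_iff (by positivity) (by positivity)]; ring
    have := (hu.exp).const_mul (-(2 * t))
    refine this.congr_deriv ?_
    field_simp; ring
  have hint : IntervalIntegrable (fun y : ℝ => (y - x) * Real.exp (-(x - y) ^ 2 / (4 * t)))
      volume 0 1 := by
    apply Continuous.intervalIntegrable
    exact (continuous_id.sub continuous_const).mul (gauss_cont t x)
  rw [intervalIntegral.integral_eq_sub_of_hasDerivAt hderiv hint]
  have h1 : Real.exp (-(x - 0) ^ 2 / (4 * t)) ≤ 1 := by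
    apply Real.exp_le_one_iff.mpr
    have h0 : (0:ℝ) ≤ (x - 0) ^ 2 / (4 * t) := by positivity
    have he : -(x - 0) ^ 2 / (4 * t) = -((x - 0) ^ 2 / (4 * t)) := by ring
    rw [he]; linarith
  have h2 : (0:ℝ) < Real.exp (-(x - 1) ^ 2 / (4 * t)) := Real.exp_pos _
  nlinarith [mul_le_mul_of_nonneg_left h1 (by positivity : (0:ℝ) ≤ 2 * t),
    mul_pos (by positivity : (0:ℝ) < 2 * t) h2]

lemma exp_sub_exp_le (a b : ℝ) (hab : a ≤ b) :
    Real.exp (-a) - Real.exp (-b) ≤ (b - a) * Real.exp (-a) := by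
  have h : Real.exp (-b) = Real.exp (-a) * Real.exp (a - b) := by
    rw [← Real.exp_add]; ring_nf
  have h2 : 1 - (b - a) ≤ Real.exp (a - b) := by
    have := Real.add_one_le_exp (a - b)
    linarith
  have h3 : (0:ℝ) < Real.exp (-a) := Real.exp_pos _
  rw [h]
  nlinarith

lemma hfin_aux (t x S : ℝ) (ht : 0 < t) (hS : 0 < S)
    (hx : x ≤ Real.sqrt t) (hSS : 2 * Real.sqrt t ≤ S) :
    S⁻¹ * t⁻¹ * (x * S + 2 * t) ≤ 2 / Real.sqrt t := by
  have hst : (0:ℝ) < Real.sqrt t := Real.sqrt_pos.mpr ht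
  have hst2 : Real.sqrt t * Real.sqrt t = t := Real.mul_self_sqrt ht.le
  have hS0 : S ≠ 0 := ne_of_gt hS
  have ht0 : t ≠ 0 := ne_of_gt ht
  have heq : S⁻¹ * t⁻¹ * (x * S + 2 * t) = x / t + 2 * S⁻¹ := by
    rw [mul_add]
    congr 1
    · rw [show S⁻¹ * t⁻¹ * (x * S) = S⁻¹ * S * (x * t⁻¹) by ring,
        inv_mul_cancel₀ hS0, one_mul, div_eq_mul_inv]
    · rw [show S⁻¹ * t⁻¹ * (2 * t) = t⁻¹ * t * (2 * S⁻¹) by ring,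
        inv_mul_cancel₀ ht0, one_mul]
  rw [heq]
  have h1 : x / t ≤ 1 / Real.sqrt t := by
    rw [div_le_div_iff₀ ht hst]
    nlinarith [mul_le_mul_of_nonneg_right hx hst.le]
  have h2 : 2 * S⁻¹ ≤ 1 / Real.sqrt t := by
    have hi : S⁻¹ ≤ (2 * Real.sqrt t)⁻¹ := inv_anti₀ (by positivity) hSS
    have he2 : 2 * (2 * Real.sqrt t)⁻¹ = 1 / Real.sqrt t := by
      rw [mul_inv, one_div]; ring
    linarith
  have h3 : 1 / Real.sqrt t + 1 / Real.sqrt t = 2 / Real.sqrt t := by ring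
  linarith

theorem stmt8 : ∃ C > 0, ∀ t > 0, ∀ x ∈ Set.Ioc (0:ℝ) 1,
    (∫ y in (0:ℝ)..1, (1 / x) * Jker t x y) ≤ C / Real.sqrt t := by
  refine ⟨2, by norm_num, fun t ht x hx => ?_⟩
  obtain ⟨hx0, hx1⟩ := hx
  have hst : (0:ℝ) < Real.sqrt t := Real.sqrt_pos.mpr ht
  have hS : (0:ℝ) < Real.sqrt (4 * Real.pi * t) := by
    apply Real.sqrt_pos.mpr; positivity
  have hJcont : Continuous (fun y : ℝ => (1 / x) * Jker t x y) := by
    unfold Jker; continuity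
  have hst2 : Real.sqrt t * Real.sqrt t = t := Real.mul_self_sqrt ht.le
  rcases le_or_gt (Real.sqrt t) x with hcase | hcase
  · -- x ≥ √t : bound Jker ≤ S⁻¹ * exp(-(x-y)²/4t)
    have hmono : (∫ y in (0:ℝ)..1, (1 / x) * Jker t x y)
        ≤ ∫ y in (0:ℝ)..1, (1 / x) * ((Real.sqrt (4 * Real.pi * t))⁻¹ *
            Real.exp (-(x - y) ^ 2 / (4 * t))) := by
      apply intervalIntegral.integral_mono_on (by norm_num)
        (hJcont.intervalIntegrable 0 1)
        (by apply Continuous.intervalIntegrable; continuity)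
      intro y _
      have h2 : (0:ℝ) < Real.exp (-(x + y) ^ 2 / (4 * t)) := Real.exp_pos _
      unfold Jker
      have hx' : (0:ℝ) ≤ 1 / x := by positivity
      apply mul_le_mul_of_nonneg_left _ hx'
      apply mul_le_mul_of_nonneg_left _ (by positivity)
      linarith
    have hsplit : (∫ y in (0:ℝ)..1, (1 / x) * ((Real.sqrt (4 * Real.pi * t))⁻¹ *
        Real.exp (-(x - y) ^ 2 / (4 * t))))
        = (1 / x) * ((Real.sqrt (4 * Real.pi * t))⁻¹ *
          ∫ y in (0:ℝ)..1, Real.exp (-(x - y) ^ 2 / (4 * t))) := by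
      rw [intervalIntegral.integral_const_mul, intervalIntegral.integral_const_mul]
    have hg := gauss_int_le t x ht
    have hle1 : (Real.sqrt (4 * Real.pi * t))⁻¹ *
        (∫ y in (0:ℝ)..1, Real.exp (-(x - y) ^ 2 / (4 * t))) ≤ 1 := by
      have h := mul_le_mul_of_nonneg_left hg (inv_nonneg.mpr hS.le)
      rwa [inv_mul_cancel₀ (ne_of_gt hS)] at h
    have hkey : (1 / x) * ((Real.sqrt (4 * Real.pi * t))⁻¹ *
        ∫ y in (0:ℝ)..1, Real.exp (-(x - y) ^ 2 / (4 * t))) ≤ 1 / x := by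
      have := mul_le_mul_of_nonneg_left hle1 (by positivity : (0:ℝ) ≤ 1 / x)
      simpa using this
    have hxinv : 1 / x ≤ 1 / Real.sqrt t := one_div_le_one_div_of_le hst hcase
    have h2inv : 1 / Real.sqrt t ≤ 2 / Real.sqrt t := by gcongr; norm_num
    calc (∫ y in (0:ℝ)..1, (1 / x) * Jker t x y) ≤ _ := hmono
      _ = _ := hsplit
      _ ≤ 1 / x := hkey
      _ ≤ 1 / Real.sqrt t := hxinv
      _ ≤ 2 / Real.sqrt t := h2inv
  · -- x < √t
    have hmono : (∫ y in (0:ℝ)..1, (1 / x) * Jker t x y)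
        ≤ ∫ y in (0:ℝ)..1, ((Real.sqrt (4 * Real.pi * t))⁻¹ * t⁻¹ *
            (x * Real.exp (-(x - y) ^ 2 / (4 * t))
              + (y - x) * Real.exp (-(x - y) ^ 2 / (4 * t)))) := by
      apply intervalIntegral.integral_mono_on (by norm_num)
        (hJcont.intervalIntegrable 0 1)
        (by apply Continuous.intervalIntegrable; continuity)
      intro y hy
      obtain ⟨hy0, hy1⟩ := hy
      have hab : (x - y) ^ 2 / (4 * t) ≤ (x + y) ^ 2 / (4 * t) := by
        apply div_le_div_of_nonneg_right _ (by positivity)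
        nlinarith
      have hexp := exp_sub_exp_le ((x - y) ^ 2 / (4 * t)) ((x + y) ^ 2 / (4 * t)) hab
      have hdiff : (x + y) ^ 2 / (4 * t) - (x - y) ^ 2 / (4 * t) = x * y / t := by
        field_simp; ring
      rw [hdiff] at hexp
      have hepos : (0:ℝ) < Real.exp (-(x - y) ^ 2 / (4 * t)) := Real.exp_pos _
      unfold Jker
      have hJle : Real.exp (-(x - y) ^ 2 / (4 * t)) - Real.exp (-(x + y) ^ 2 / (4 * t))
          ≤ (x * y / t) * Real.exp (-(x - y) ^ 2 / (4 * t)) := by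
        have e1 : Real.exp (-(x - y) ^ 2 / (4 * t)) = Real.exp (-((x - y) ^ 2 / (4 * t))) := by
          congr 1; ring
        have e2 : Real.exp (-(x + y) ^ 2 / (4 * t)) = Real.exp (-((x + y) ^ 2 / (4 * t))) := by
          congr 1; ring
        rw [e1, e2]; exact hexp
      have hxinv : (0:ℝ) < 1 / x := by positivity
      have step : (1 / x) * ((Real.sqrt (4 * Real.pi * t))⁻¹ *
          (Real.exp (-(x - y) ^ 2 / (4 * t)) - Real.exp (-(x + y) ^ 2 / (4 * t))))
          ≤ (1 / x) * ((Real.sqrt (4 * Real.pi * t))⁻¹ *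
            ((x * y / t) * Real.exp (-(x - y) ^ 2 / (4 * t)))) := by
        apply mul_le_mul_of_nonneg_left _ hxinv.le
        exact mul_le_mul_of_nonneg_left hJle (by positivity)
      refine step.trans (le_of_eq ?_)
      have hx0' : x ≠ 0 := ne_of_gt hx0
      have ht' : t ≠ 0 := ne_of_gt ht
      field_simp
      ring
    have hA : IntervalIntegrable (fun y : ℝ => x * Real.exp (-(x - y) ^ 2 / (4 * t)))
        volume 0 1 := by
      apply Continuous.intervalIntegrable
      exact continuous_const.mul (gauss_cont t x)
    have hB : IntervalIntegrable (fun y : ℝ => (y - x) * Real.exp (-(x - y) ^ 2 / (4 * t)))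
        volume 0 1 := by
      apply Continuous.intervalIntegrable
      exact (continuous_id.sub continuous_const).mul (gauss_cont t x)
    have hsplit : (∫ y in (0:ℝ)..1, ((Real.sqrt (4 * Real.pi * t))⁻¹ * t⁻¹ *
        (x * Real.exp (-(x - y) ^ 2 / (4 * t))
          + (y - x) * Real.exp (-(x - y) ^ 2 / (4 * t)))))
        = (Real.sqrt (4 * Real.pi * t))⁻¹ * t⁻¹ *
          ((x * ∫ y in (0:ℝ)..1, Real.exp (-(x - y) ^ 2 / (4 * t)))
            + ∫ y in (0:ℝ)..1, (y - x) * Real.exp (-(x - y) ^ 2 / (4 * t))) := by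
      rw [intervalIntegral.integral_const_mul, intervalIntegral.integral_add hA hB,
        intervalIntegral.integral_const_mul]
    have hg := gauss_int_le t x ht
    have hftc := ftc_int t x ht
    have hb1 : (x * ∫ y in (0:ℝ)..1, Real.exp (-(x - y) ^ 2 / (4 * t)))
        + (∫ y in (0:ℝ)..1, (y - x) * Real.exp (-(x - y) ^ 2 / (4 * t)))
        ≤ x * Real.sqrt (4 * Real.pi * t) + 2 * t := by
      have := mul_le_mul_of_nonneg_left hg hx0.le
      linarith
    have hmain : (Real.sqrt (4 * Real.pi * t))⁻¹ * t⁻¹ *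
        ((x * ∫ y in (0:ℝ)..1, Real.exp (-(x - y) ^ 2 / (4 * t)))
          + (∫ y in (0:ℝ)..1, (y - x) * Real.exp (-(x - y) ^ 2 / (4 * t))))
        ≤ (Real.sqrt (4 * Real.pi * t))⁻¹ * t⁻¹ *
          (x * Real.sqrt (4 * Real.pi * t) + 2 * t) :=
      mul_le_mul_of_nonneg_left hb1 (by positivity)
    have hSS : 2 * Real.sqrt t ≤ Real.sqrt (4 * Real.pi * t) := by
      have h' : Real.sqrt (4 * t) ≤ Real.sqrt (4 * Real.pi * t) := by
        apply Real.sqrt_le_sqrt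
        nlinarith [Real.pi_gt_three, ht.le]
      have h4t : Real.sqrt (4 * t) = 2 * Real.sqrt t := by
        rw [show (4:ℝ) * t = 2 ^ 2 * t by ring, Real.sqrt_mul (by positivity),
          Real.sqrt_sq (by norm_num)]
      linarith [h4t ▸ h']
    have hfin := hfin_aux t x (Real.sqrt (4 * Real.pi * t)) ht hS hcase.le hSS
    exact hmono.trans (hsplit.trans_le (hmain.trans hfin))
end
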